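/- Let A be a self-adjoint operator and ρ a density operator (positive semidefinite with trace 1) on a finite-dimensional complex Hilbert space. If f is a convex function on the convex hull of the spectrum of A, then f(Tr(Aρ)) ≤ Tr(f(A)ρ). -/

import Mathlib

open ComplexOrder
/-- **Jensen's inequality for expectation values.** If `A` is a Hermitian matrix, `ρ` a
density matrix (positive semidefinite of trace one), and `f` convex on the convex hull
of the spectrum of `A`, then `f (Tr (A ρ)) ≤ Tr (f(A) ρ)`, where `f(A)` is given by the
continuous functional calculus.  (Both traces are in fact real numbers.) -/
theorem jensen_trace_inequality {n : ℕ} (A ρ : Matrix (Fin n) (Fin n) ℂ)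
    (hA : A.IsHermitian) (hρ : ρ.PosSemidef) (hρ1 : ρ.trace = 1)
    (f : ℝ → ℝ) (hf : ConvexOn ℝ (convexHull ℝ (spectrum ℝ A)) f) :
    f ((A * ρ).trace.re) ≤ ((cfc f A * ρ).trace).re := by
  classical
  set U : Matrix (Fin n) (Fin n) ℂ := (hA.eigenvectorUnitary : Matrix (Fin n) (Fin n) ℂ) with hU
  set σ : Matrix (Fin n) (Fin n) ℂ := star U * ρ * U with hσdef
  have hσpsd : σ.PosSemidef := by
    have := hρ.conjTranspose_mul_mul_same U
    simpa [hσdef, Matrix.star_eq_conjTranspose] using this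
  -- diagonal entries of σ are nonneg reals
  have hdiag : ∀ i, 0 ≤ σ i i := by
    intro i
    exact hσpsd.diag_nonneg
  set p : Fin n → ℝ := fun i => (σ i i).re with hp
  have hp0 : ∀ i, 0 ≤ p i := fun i => (Complex.le_def.mp (hdiag i)).1
  have him : ∀ i, (σ i i).im = 0 := fun i => ((Complex.le_def.mp (hdiag i)).2).symm
  -- trace of σ is 1
  have hσtr : σ.trace = 1 := by
    rw [hσdef, Matrix.trace_mul_cycle,
      (Matrix.mem_unitaryGroup_iff).mp (Matrix.IsHermitian.eigenvectorUnitary hA).2, one_mul, hρ1]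
  have hpsum : ∑ i, p i = 1 := by
    have := congrArg Complex.re hσtr
    simpa [Matrix.trace, Matrix.diag, hp] using this
  -- key trace computation
  have key : ∀ g : ℝ → ℝ,
      ((U * Matrix.diagonal (Complex.ofReal ∘ g ∘ hA.eigenvalues) * star U) * ρ).trace
        = ∑ i, (g (hA.eigenvalues i) : ℂ) * σ i i := by
    intro g
    have h1 : (U * Matrix.diagonal (Complex.ofReal ∘ g ∘ hA.eigenvalues) * star U) * ρ
        = (U * Matrix.diagonal (Complex.ofReal ∘ g ∘ hA.eigenvalues)) * (star U * ρ) := by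
      simp only [Matrix.mul_assoc]
    rw [h1, Matrix.trace_mul_comm]
    have h2 : (star U * ρ) * (U * Matrix.diagonal (Complex.ofReal ∘ g ∘ hA.eigenvalues))
        = σ * Matrix.diagonal (Complex.ofReal ∘ g ∘ hA.eigenvalues) := by
      rw [hσdef]; simp only [Matrix.mul_assoc]
    rw [h2]
    simp [Matrix.trace, Matrix.diag, Matrix.mul_diagonal, mul_comm]
  have hre : ∀ g : ℝ → ℝ,
      (∑ i, (g (hA.eigenvalues i) : ℂ) * σ i i).re = ∑ i, g (hA.eigenvalues i) * p i := by
    intro g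
    rw [Complex.re_sum]
    refine Finset.sum_congr rfl fun i _ => ?_
    simp [Complex.mul_re, him i, hp]
  -- rewrite the two traces
  have hAtr : (A * ρ).trace.re = ∑ i, hA.eigenvalues i * p i := by
    conv_lhs => rw [hA.spectral_theorem]
    have : Matrix.diagonal (RCLike.ofReal ∘ hA.eigenvalues)
        = Matrix.diagonal (Complex.ofReal ∘ id ∘ hA.eigenvalues) := rfl
    rw [this, Unitary.conjStarAlgAut_apply, key id]
    exact hre id
  have hcfc : cfc f A = U * Matrix.diagonal (Complex.ofReal ∘ f ∘ hA.eigenvalues) * star U := by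
    rw [hA.cfc_eq]
    rfl
  have hftr : (cfc f A * ρ).trace.re = ∑ i, f (hA.eigenvalues i) * p i := by
    rw [hcfc, key f]
    exact hre f
  rw [hAtr, hftr]
  -- Jensen's inequality
  have hmem : ∀ i ∈ Finset.univ (α := Fin n),
      hA.eigenvalues i ∈ convexHull ℝ (spectrum ℝ A) := fun i _ =>
    subset_convexHull ℝ _ (hA.eigenvalues_mem_spectrum_real i)
  have := hf.map_sum_le (t := Finset.univ) (w := p) (p := hA.eigenvalues)
    (fun i _ => hp0 i) hpsum hmem
  simpa [smul_eq_mul, mul_comm] using this
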